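/- Let Σ ∈ 𝒱 be symmetric with G(Σ) = (σ,τ). Then Σ is positive definite if and only if both σ and τ are positive definite. -/

import Mathlib

open Matrix

/-- The space 𝒱 of 4g₀×4g₀ matrices of the block form
[[α,β,γ,δ],[β,α,−δ,−γ],[π,ρ,ξ,η],[−ρ,−π,η,ξ]]. -/
def Vspace (g₀ : ℕ) (R : Type*) [Ring R] :
    Set (Matrix ((Fin g₀ ⊕ Fin g₀) ⊕ (Fin g₀ ⊕ Fin g₀))
      ((Fin g₀ ⊕ Fin g₀) ⊕ (Fin g₀ ⊕ Fin g₀)) R) :=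
  {S | ∃ a b c d p r x e : Matrix (Fin g₀) (Fin g₀) R,
    S = Matrix.fromBlocks (Matrix.fromBlocks a b b a) (Matrix.fromBlocks c d (-d) (-c))
      (Matrix.fromBlocks p r (-r) (-p)) (Matrix.fromBlocks x e e x)}

/-- First component of the map G: [[α+β, γ−δ],[π+ρ, ξ−η]]. -/
def gg1 {g₀ : ℕ} {R : Type*} [Ring R]
    (S : Matrix ((Fin g₀ ⊕ Fin g₀) ⊕ (Fin g₀ ⊕ Fin g₀))
      ((Fin g₀ ⊕ Fin g₀) ⊕ (Fin g₀ ⊕ Fin g₀)) R) :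
    Matrix (Fin g₀ ⊕ Fin g₀) (Fin g₀ ⊕ Fin g₀) R :=
  Matrix.fromBlocks
    (S.submatrix (Sum.inl ∘ Sum.inl) (Sum.inl ∘ Sum.inl) +
      S.submatrix (Sum.inl ∘ Sum.inl) (Sum.inl ∘ Sum.inr))
    (S.submatrix (Sum.inl ∘ Sum.inl) (Sum.inr ∘ Sum.inl) -
      S.submatrix (Sum.inl ∘ Sum.inl) (Sum.inr ∘ Sum.inr))
    (S.submatrix (Sum.inr ∘ Sum.inl) (Sum.inl ∘ Sum.inl) +
      S.submatrix (Sum.inr ∘ Sum.inl) (Sum.inl ∘ Sum.inr))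
    (S.submatrix (Sum.inr ∘ Sum.inl) (Sum.inr ∘ Sum.inl) -
      S.submatrix (Sum.inr ∘ Sum.inl) (Sum.inr ∘ Sum.inr))

/-- Second component of the map G: [[α−β, γ+δ],[π−ρ, ξ+η]]. -/
def gg2 {g₀ : ℕ} {R : Type*} [Ring R]
    (S : Matrix ((Fin g₀ ⊕ Fin g₀) ⊕ (Fin g₀ ⊕ Fin g₀))
      ((Fin g₀ ⊕ Fin g₀) ⊕ (Fin g₀ ⊕ Fin g₀)) R) :
    Matrix (Fin g₀ ⊕ Fin g₀) (Fin g₀ ⊕ Fin g₀) R :=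
  Matrix.fromBlocks
    (S.submatrix (Sum.inl ∘ Sum.inl) (Sum.inl ∘ Sum.inl) -
      S.submatrix (Sum.inl ∘ Sum.inl) (Sum.inl ∘ Sum.inr))
    (S.submatrix (Sum.inl ∘ Sum.inl) (Sum.inr ∘ Sum.inl) +
      S.submatrix (Sum.inl ∘ Sum.inl) (Sum.inr ∘ Sum.inr))
    (S.submatrix (Sum.inr ∘ Sum.inl) (Sum.inl ∘ Sum.inl) -
      S.submatrix (Sum.inr ∘ Sum.inl) (Sum.inl ∘ Sum.inr))
    (S.submatrix (Sum.inr ∘ Sum.inl) (Sum.inr ∘ Sum.inl) +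
      S.submatrix (Sum.inr ∘ Sum.inl) (Sum.inr ∘ Sum.inr))

/-- The standard symplectic matrix J = [[0,Id],[−Id,0]]. -/
def Jstd (n : Type*) (R : Type*) [Ring R] [DecidableEq n] [Fintype n] :
    Matrix (n ⊕ n) (n ⊕ n) R :=
  Matrix.fromBlocks 0 1 (-1) 0


section Stmt10Aux

set_option linter.unusedSectionVars false

variable {n m : Type*} [Fintype n] [Fintype m] [DecidableEq n] [DecidableEq m]

private lemma ctR' {k l : Type*} (M : Matrix k l ℝ) : Mᴴ = Mᵀ := by
  ext i j; simp [conjTranspose_apply]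

private lemma posDef_smul_real' {M : Matrix n n ℝ} (hM : M.PosDef) {c : ℝ} (hc : 0 < c) :
    (c • M).PosDef := by
  refine PosDef.of_dotProduct_mulVec_pos ?_ (fun x hx => ?_)
  · unfold Matrix.IsHermitian at *
    rw [conjTranspose_smul, hM.1]
    simp
  · have := hM.dotProduct_mulVec_pos hx
    simp only [smul_mulVec, dotProduct_smul, smul_eq_mul]
    positivity

private lemma posDef_conj_real' {M B C : Matrix n n ℝ} (hM : M.PosDef) (hCB : C * B = 1) :
    (Bᵀ * M * B).PosDef := by
  have hMT : Mᵀ = M := by rw [← ctR' M, hM.1.eq]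
  refine PosDef.of_dotProduct_mulVec_pos ?_ (fun x hx => ?_)
  · unfold Matrix.IsHermitian
    rw [ctR', transpose_mul, transpose_mul, transpose_transpose, hMT, Matrix.mul_assoc]
  · have hBx : B *ᵥ x ≠ 0 := by
      intro h
      apply hx
      have h2 : C *ᵥ (B *ᵥ x) = C *ᵥ 0 := by rw [h]
      simpa [mulVec_mulVec, hCB] using h2
    have h3 := hM.dotProduct_mulVec_pos hBx
    rw [star_trivial] at h3 ⊢
    rw [Matrix.mul_assoc, ← mulVec_mulVec, dotProduct_mulVec, vecMul_transpose,
      ← mulVec_mulVec]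
    exact h3

private lemma posDef_fromBlocks_diag' {A : Matrix n n ℝ} {B : Matrix m m ℝ} :
    (fromBlocks A 0 0 B).PosDef ↔ A.PosDef ∧ B.PosDef := by
  constructor
  · intro h
    have herm : (fromBlocks A 0 0 B)ᵀ = fromBlocks A 0 0 B := by
      rw [← ctR', h.1.eq]
    rw [fromBlocks_transpose] at herm
    have hA : Aᴴ = A := by
      rw [ctR']
      ext i j
      have := congrFun (congrFun herm (Sum.inl i)) (Sum.inl j)
      simpa [fromBlocks] using this
    have hB : Bᴴ = B := by
      rw [ctR']
      ext i j
      have := congrFun (congrFun herm (Sum.inr i)) (Sum.inr j)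
      simpa [fromBlocks] using this
    refine ⟨PosDef.of_dotProduct_mulVec_pos hA (fun u hu => ?_), PosDef.of_dotProduct_mulVec_pos hB (fun u hu => ?_)⟩
    · have hx : (Sum.elim u 0 : n ⊕ m → ℝ) ≠ 0 := by
        intro hc
        apply hu
        ext i
        exact congrFun hc (Sum.inl i)
      have h2 := h.dotProduct_mulVec_pos hx
      rw [star_trivial] at h2
      rw [fromBlocks_mulVec, sumElim_dotProduct_sumElim] at h2
      simpa [star_trivial] using h2
    · have hx : (Sum.elim 0 u : n ⊕ m → ℝ) ≠ 0 := by
        intro hc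
        apply hu
        ext i
        exact congrFun hc (Sum.inr i)
      have h2 := h.dotProduct_mulVec_pos hx
      rw [star_trivial] at h2
      rw [fromBlocks_mulVec, sumElim_dotProduct_sumElim] at h2
      simpa [star_trivial] using h2
  · rintro ⟨hA, hB⟩
    refine PosDef.of_dotProduct_mulVec_pos ?_ (fun x hx => ?_)
    · unfold Matrix.IsHermitian
      have hA' : Aᵀ = A := by rw [← ctR', hA.1.eq]
      have hB' : Bᵀ = B := by rw [← ctR', hB.1.eq]
      rw [ctR', fromBlocks_transpose, hA', hB']
      simp
    · have hxe : Sum.elim (x ∘ Sum.inl) (x ∘ Sum.inr) = x := Sum.elim_comp_inl_inr x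
      have hval : star x ⬝ᵥ (fromBlocks A 0 0 B) *ᵥ x
          = (x ∘ Sum.inl) ⬝ᵥ A *ᵥ (x ∘ Sum.inl) + (x ∘ Sum.inr) ⬝ᵥ B *ᵥ (x ∘ Sum.inr) := by
        rw [star_trivial, ← hxe, fromBlocks_mulVec, sumElim_dotProduct_sumElim]
        simp [Sum.elim_comp_inl, Sum.elim_comp_inr]
      rw [hval]
      by_cases h1 : (x ∘ Sum.inl) = 0
      · have h2 : (x ∘ Sum.inr) ≠ 0 := by
          intro h2
          apply hx
          rw [← hxe, h1, h2]
          ext (i | i) <;> simp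
        have hp := hB.dotProduct_mulVec_pos h2
        have hA0 := hA.posSemidef.dotProduct_mulVec_nonneg (x ∘ Sum.inl)
        rw [star_trivial] at hp hA0
        linarith
      · have hp := hA.dotProduct_mulVec_pos h1
        have hB0 := hB.posSemidef.dotProduct_mulVec_nonneg (x ∘ Sum.inr)
        rw [star_trivial] at hp hB0
        linarith

end Stmt10Aux

/-- The change-of-basis matrix. -/
noncomputable def Qm (g₀ : ℕ) : Matrix ((Fin g₀ ⊕ Fin g₀) ⊕ (Fin g₀ ⊕ Fin g₀))
    ((Fin g₀ ⊕ Fin g₀) ⊕ (Fin g₀ ⊕ Fin g₀)) ℝ :=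
  fromBlocks (fromBlocks 1 1 0 0) (fromBlocks 0 0 1 (-1))
             (fromBlocks 1 (-1) 0 0) (fromBlocks 0 0 1 1)

private lemma QQT (g₀ : ℕ) : Qm g₀ * (Qm g₀)ᵀ = (2 : ℝ) • 1 := by
  unfold Qm
  simp only [fromBlocks_transpose, fromBlocks_multiply, transpose_one, transpose_zero,
    transpose_neg, Matrix.mul_one, Matrix.mul_zero, Matrix.zero_mul, Matrix.one_mul,
    Matrix.mul_neg, Matrix.neg_mul, add_zero, zero_add, neg_neg, neg_zero]
  ext (⟨i|i⟩|⟨i|i⟩) (⟨j|j⟩|⟨j|j⟩) <;>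
    simp [fromBlocks, one_apply] <;> split_ifs <;> norm_num

private lemma QTQ (g₀ : ℕ) : (Qm g₀)ᵀ * Qm g₀ = (2 : ℝ) • 1 := by
  unfold Qm
  simp only [fromBlocks_transpose, fromBlocks_multiply, transpose_one, transpose_zero,
    transpose_neg, Matrix.mul_one, Matrix.mul_zero, Matrix.zero_mul, Matrix.one_mul,
    Matrix.mul_neg, Matrix.neg_mul, add_zero, zero_add, neg_neg, neg_zero]
  ext (⟨i|i⟩|⟨i|i⟩) (⟨j|j⟩|⟨j|j⟩) <;>
    simp [fromBlocks, one_apply] <;> split_ifs <;> norm_num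

private lemma gg1_eq (g₀ : ℕ) (a b c d p r x e : Matrix (Fin g₀) (Fin g₀) ℝ) :
    gg1 (Matrix.fromBlocks (Matrix.fromBlocks a b b a) (Matrix.fromBlocks c d (-d) (-c))
      (Matrix.fromBlocks p r (-r) (-p)) (Matrix.fromBlocks x e e x))
      = fromBlocks (a + b) (c - d) (p + r) (x - e) := by
  ext (i|i) (j|j) <;> simp [gg1, fromBlocks, sub_eq_add_neg]

private lemma gg2_eq (g₀ : ℕ) (a b c d p r x e : Matrix (Fin g₀) (Fin g₀) ℝ) :
    gg2 (Matrix.fromBlocks (Matrix.fromBlocks a b b a) (Matrix.fromBlocks c d (-d) (-c))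
      (Matrix.fromBlocks p r (-r) (-p)) (Matrix.fromBlocks x e e x))
      = fromBlocks (a - b) (c + d) (p - r) (x + e) := by
  ext (i|i) (j|j) <;> simp [gg2, fromBlocks, sub_eq_add_neg]

set_option maxHeartbeats 1000000 in
private lemma key_id (g₀ : ℕ) (a b c d p r x e : Matrix (Fin g₀) (Fin g₀) ℝ) :
    (Qm g₀)ᵀ * fromBlocks (fromBlocks (a+b) (c-d) (p+r) (x-e)) 0 0
      (fromBlocks (a-b) (c+d) (p-r) (x+e)) * Qm g₀ =
    (2 : ℝ) • Matrix.fromBlocks (Matrix.fromBlocks a b b a) (Matrix.fromBlocks c d (-d) (-c))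
      (Matrix.fromBlocks p r (-r) (-p)) (Matrix.fromBlocks x e e x) := by
  unfold Qm
  simp only [fromBlocks_transpose, fromBlocks_multiply, transpose_one, transpose_zero,
    transpose_neg, Matrix.mul_one, Matrix.mul_zero, Matrix.zero_mul, Matrix.one_mul,
    Matrix.mul_neg, Matrix.neg_mul, add_zero, zero_add, neg_neg, neg_zero, fromBlocks_zero, fromBlocks_add]
  ext (⟨i|i⟩|⟨i|i⟩) (⟨j|j⟩|⟨j|j⟩) <;>
    simp [fromBlocks, Matrix.add_apply, Matrix.sub_apply, Matrix.neg_apply] <;> ring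

set_option maxHeartbeats 1000000 in
private lemma key_id2 (g₀ : ℕ) (a b c d p r x e : Matrix (Fin g₀) (Fin g₀) ℝ) :
    Qm g₀ * Matrix.fromBlocks (Matrix.fromBlocks a b b a) (Matrix.fromBlocks c d (-d) (-c))
      (Matrix.fromBlocks p r (-r) (-p)) (Matrix.fromBlocks x e e x) * (Qm g₀)ᵀ =
    (2 : ℝ) • fromBlocks (fromBlocks (a+b) (c-d) (p+r) (x-e)) 0 0
      (fromBlocks (a-b) (c+d) (p-r) (x+e)) := by
  unfold Qm
  simp only [fromBlocks_transpose, fromBlocks_multiply, transpose_one, transpose_zero,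
    transpose_neg, Matrix.mul_one, Matrix.mul_zero, Matrix.zero_mul, Matrix.one_mul,
    Matrix.mul_neg, Matrix.neg_mul, add_zero, zero_add, neg_neg, neg_zero, fromBlocks_zero, fromBlocks_add]
  ext (⟨i|i⟩|⟨i|i⟩) (⟨j|j⟩|⟨j|j⟩) <;>
    simp [fromBlocks, Matrix.add_apply, Matrix.sub_apply, Matrix.neg_apply] <;> ring


theorem stmt10 (g₀ : ℕ)
    (S : Matrix ((Fin g₀ ⊕ Fin g₀) ⊕ (Fin g₀ ⊕ Fin g₀))
      ((Fin g₀ ⊕ Fin g₀) ⊕ (Fin g₀ ⊕ Fin g₀)) ℝ)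
    (hS : S ∈ Vspace g₀ ℝ) (hsymm : Sᵀ = S) :
    S.PosDef ↔ (gg1 S).PosDef ∧ (gg2 S).PosDef := by
  obtain ⟨a, b, c, d, p, r, x, e, hSe⟩ := hS
  subst hSe
  rw [gg1_eq, gg2_eq]
  constructor
  · intro hP
    have hconj : (((Qm g₀)ᵀ)ᵀ * (Matrix.fromBlocks (Matrix.fromBlocks a b b a)
        (Matrix.fromBlocks c d (-d) (-c)) (Matrix.fromBlocks p r (-r) (-p))
        (Matrix.fromBlocks x e e x)) * (Qm g₀)ᵀ).PosDef := by
      refine posDef_conj_real' hP (C := (2 : ℝ)⁻¹ • Qm g₀) ?_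
      rw [Matrix.smul_mul, QQT g₀, smul_smul]
      norm_num
    rw [transpose_transpose, key_id2] at hconj
    have hsm := posDef_smul_real' hconj (c := (2 : ℝ)⁻¹) (by norm_num)
    rw [smul_smul] at hsm
    norm_num at hsm
    exact posDef_fromBlocks_diag'.mp hsm
  · rintro ⟨h1, h2⟩
    have hD := posDef_fromBlocks_diag'.mpr ⟨h1, h2⟩
    have hconj : ((Qm g₀)ᵀ * (fromBlocks (fromBlocks (a+b) (c-d) (p+r) (x-e)) 0 0
        (fromBlocks (a-b) (c+d) (p-r) (x+e))) * Qm g₀).PosDef := by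
      refine posDef_conj_real' hD (C := (2 : ℝ)⁻¹ • (Qm g₀)ᵀ) ?_
      rw [Matrix.smul_mul, QTQ g₀, smul_smul]
      norm_num
    rw [key_id] at hconj
    have hsm := posDef_smul_real' hconj (c := (2 : ℝ)⁻¹) (by norm_num)
    rw [smul_smul] at hsm
    norm_num at hsm
    exact hsm
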